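/- Let $u_1 : \overline{B_r(x_1)} \to \mathbb{R}$ be continuous with $u_1(x_1) > 0$, and suppose $\Delta u_1 \geq c_0 > 0$ in the open set $\Lambda \cap B_r(x_1)$ where $\Lambda = \{u_1 > 0\}$. Then $\sup_{\partial B_r(x_1)} u_1 \geq \frac{c_0}{2n} r^2$. -/

import Mathlib

open Real Metric Set

/-- The Laplacian of `u : ℝ^n → ℝ`, as the sum of second partial derivatives. -/
noncomputable def lapl (n : ℕ) (u : EuclideanSpace ℝ (Fin n) → ℝ)
    (x : EuclideanSpace ℝ (Fin n)) : ℝ :=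
  ∑ i : Fin n,
    fderiv ℝ (fun w => fderiv ℝ u w (EuclideanSpace.single i 1)) x (EuclideanSpace.single i 1)

local notation "⟪" x ", " y "⟫" => @inner ℝ _ _ x y

set_option maxHeartbeats 1000000 in
/-- Core one-sided contradiction lemma. -/
lemma core_lemma (n : ℕ) (x₁ z w : EuclideanSpace ℝ (Fin n)) (α r : ℝ)
    (u : EuclideanSpace ℝ (Fin n) → ℝ)
    (hα : 0 < α) (hw : ‖w‖ = 1) (hz : z ∈ ball x₁ r)
    (hcont : ContinuousOn u (closedBall x₁ r))
    (hmax : IsMaxOn (fun x => u x - α * ‖x - x₁‖ ^ 2) (closedBall x₁ r) z)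
    (he : 2 * α * ⟪z - x₁, w⟫ ≤ fderiv ℝ u z w)
    (hD : 2 * α < fderiv ℝ (fun x => fderiv ℝ u x w) z w) : False := by
  set c : ℝ := ⟪z - x₁, w⟫ with hc
  set a : ℝ := fderiv ℝ u z w with ha
  set h : EuclideanSpace ℝ (Fin n) → ℝ := fun x => fderiv ℝ u x w with hh
  set D : ℝ := fderiv ℝ h z w with hDdef
  have hDpos : 0 < D := lt_trans (by positivity) hD
  have hdh : DifferentiableAt ℝ h z := by
    by_contra hnd
    rw [hDdef, fderiv_zero_of_not_differentiableAt hnd] at hDpos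
    simp at hDpos
  have hline : ∀ t : ℝ, HasDerivAt (fun s : ℝ => z + s • w) w t := by
    intro t
    simpa using ((hasDerivAt_id t).smul_const w).const_add z
  have h0vec : z + (0:ℝ) • w = z := by simp
  have hψ : HasDerivAt (fun t : ℝ => h (z + t • w)) D 0 := by
    have := (h0vec ▸ hdh.hasFDerivAt).comp_hasDerivAt 0 (hline 0)
    exact (by simpa [hDdef, h0vec] using this : HasDerivAt (h ∘ fun s : ℝ => z + s • w) D 0)
  have hslope := hasDerivAt_iff_tendsto_slope.mp hψ
  set ε : ℝ := (D - 2 * α) / 2 with hε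
  have hεpos : 0 < ε := by rw [hε]; linarith
  have hεD : ε < D := by rw [hε]; linarith
  have h1 : ∀ᶠ t in nhdsWithin (0:ℝ) (Ioi 0),
      |slope (fun t : ℝ => h (z + t • w)) 0 t - D| < ε := by
    have hmono : nhdsWithin (0:ℝ) (Ioi 0) ≤ nhdsWithin (0:ℝ) {(0:ℝ)}ᶜ :=
      nhdsWithin_mono 0 (fun t ht => ne_of_gt ht)
    exact (hslope.mono_left hmono).eventually (eventually_abs_sub_lt D hεpos)
  obtain ⟨δ₀, hδ₀mem, hIoo⟩ := mem_nhdsGT_iff_exists_Ioo_subset.mp h1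
  have hδ₀ : 0 < δ₀ := hδ₀mem
  set A : ℝ := if a < 0 then -a / (2 * (D + ε)) else 1 with hA
  have hApos : 0 < A := by
    rw [hA]; split
    · apply div_pos (by linarith) (by linarith)
    · norm_num
  have hrd : 0 < r - dist z x₁ := by
    have := mem_ball.mp hz; linarith
  set δ : ℝ := min (min (δ₀ / 2) ((r - dist z x₁) / 2)) A with hδ
  have hδpos : 0 < δ := by
    rw [hδ]; positivity
  have hδδ₀ : δ < δ₀ := by
    calc δ ≤ δ₀ / 2 := le_trans (min_le_left _ _) (min_le_left _ _)
    _ < δ₀ := by linarith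
  have hδr : δ ≤ (r - dist z x₁) / 2 := le_trans (min_le_left _ _) (min_le_right _ _)
  have hδA : δ ≤ A := min_le_right _ _
  -- key estimate
  have key : ∀ t ∈ Ioo (0:ℝ) δ,
      2 * α * c + 2 * α * t < h (z + t • w) ∧ h (z + t • w) ≠ 0 := by
    intro t ht
    have hts : t ∈ Ioo 0 δ₀ := ⟨ht.1, lt_trans ht.2 hδδ₀⟩
    have hb := hIoo hts
    simp only [mem_setOf_eq] at hb
    have htpos : 0 < t := ht.1
    have hval : h (z + t • w) = a + t * slope (fun t : ℝ => h (z + t • w)) 0 t := by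
      rw [slope_def_field, h0vec]
      have hza : h z = a := rfl
      rw [hza]
      field_simp
      rw [sub_zero, mul_div_cancel_left₀ _ htpos.ne']; ring
    set s : ℝ := slope (fun t : ℝ => h (z + t • w)) 0 t with hs
    rw [abs_sub_lt_iff] at hb
    constructor
    · rw [hval]
      have h2 : D - ε - 2 * α = ε := by rw [hε]; ring
      nlinarith [hb.2, ht.1]
    · rw [hval]
      rcases lt_or_ge a 0 with haneg | hanneg
      · have hAa : A = -a / (2 * (D + ε)) := by rw [hA, if_pos haneg]
        have htA : t < -a / (2 * (D + ε)) := lt_of_lt_of_le ht.2 (hAa ▸ hδA)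
        have h3 : t * (2 * (D + ε)) < -a := by
          rw [lt_div_iff₀ (by linarith)] at htA; linarith
        have : a + t * s < a / 2 := by nlinarith [hb.1]
        intro hcontra; rw [hcontra] at this; linarith
      · have : 0 < a + t * s := by nlinarith [hb.1]
        linarith [this.ne']
  -- the function along the segment
  set φ : ℝ → ℝ := fun t => u (z + t • w) - α * (‖z - x₁‖ ^ 2 + 2 * c * t + t ^ 2) with hφ
  have hnorm : ∀ t : ℝ, ‖z + t • w - x₁‖ ^ 2 = ‖z - x₁‖ ^ 2 + 2 * c * t + t ^ 2 := by
    intro t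
    rw [add_sub_right_comm, norm_add_sq_real, real_inner_smul_right, norm_smul, hw]
    simp [Real.norm_eq_abs, sq_abs, hc]
    ring
  have hmem : ∀ t ∈ Icc (0:ℝ) δ, z + t • w ∈ closedBall x₁ r := by
    intro t ht
    rw [mem_closedBall, dist_eq_norm, add_sub_right_comm]
    have h1 : ‖z - x₁ + t • w‖ ≤ ‖z - x₁‖ + ‖t • w‖ := norm_add_le _ _
    have h2 : ‖t • w‖ = t := by
      rw [norm_smul, hw, mul_one, Real.norm_eq_abs, abs_of_nonneg ht.1]
    have h3 : ‖z - x₁‖ = dist z x₁ := (dist_eq_norm z x₁).symm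
    have h4 : t ≤ δ := ht.2
    linarith [hδr]
  have hlinec : Continuous (fun t : ℝ => z + t • w) :=
    continuous_const.add (continuous_id.smul continuous_const)
  have hφcont : ContinuousOn φ (Icc 0 δ) := by
    apply ContinuousOn.sub
    · exact hcont.comp hlinec.continuousOn hmem
    · apply Continuous.continuousOn
      fun_prop
  have hφderiv : ∀ t ∈ interior (Icc (0:ℝ) δ), 0 < deriv φ t := by
    rw [interior_Icc]
    intro t ht
    obtain ⟨hgt, hne⟩ := key t ht
    have hud : DifferentiableAt ℝ u (z + t • w) := by
      by_contra hnd
      rw [hh] at hne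
      simp only [fderiv_zero_of_not_differentiableAt hnd] at hne
      simp at hne
    have hd1 : HasDerivAt (fun s : ℝ => u (z + s • w)) (h (z + t • w)) t := by
      have := hud.hasFDerivAt.comp_hasDerivAt t (hline t)
      exact (by simpa [hh] using this : HasDerivAt (u ∘ fun s : ℝ => z + s • w) (h (z + t • w)) t)
    have hd2 : HasDerivAt (fun s : ℝ => α * (‖z - x₁‖ ^ 2 + 2 * c * s + s ^ 2))
        (α * (2 * c + 2 * t)) t := by
      have hp : HasDerivAt (fun s : ℝ => ‖z - x₁‖ ^ 2 + 2 * c * s + s ^ 2)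
          (2 * c + 2 * t) t := by
        have e1 : HasDerivAt (fun s : ℝ => 2 * c * s) (2 * c) t := by
          simpa using (hasDerivAt_id t).const_mul (2 * c)
        have e2 : HasDerivAt (fun s : ℝ => s ^ 2) (2 * t) t := by
          simpa using hasDerivAt_pow 2 t
        exact (by simpa using ((e1.const_add (‖z - x₁‖ ^ 2)).add e2) :
          HasDerivAt ((fun x => ‖z - x₁‖ ^ 2 + 2 * c * x) + fun s : ℝ => s ^ 2) (2 * c + 2 * t) t)
      simpa using hp.const_mul α
    have hdφ : HasDerivAt φ (h (z + t • w) - α * (2 * c + 2 * t)) t := hd1.sub hd2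
    rw [hdφ.deriv]
    nlinarith [hgt]
  have hmono := strictMonoOn_of_deriv_pos (convex_Icc 0 δ) hφcont hφderiv
  have hlt : φ 0 < φ δ :=
    hmono (left_mem_Icc.mpr hδpos.le) (right_mem_Icc.mpr hδpos.le) hδpos
  have hle : u (z + δ • w) - α * ‖z + δ • w - x₁‖ ^ 2 ≤ u z - α * ‖z - x₁‖ ^ 2 :=
    hmax (hmem δ (right_mem_Icc.mpr hδpos.le))
  rw [hnorm δ] at hle
  have hφ0 : φ 0 = u z - α * ‖z - x₁‖ ^ 2 := by
    rw [hφ]; simp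
  have hφδ : φ δ = u (z + δ • w) - α * (‖z - x₁‖ ^ 2 + 2 * c * δ + δ ^ 2) := rfl
  rw [hφ0, hφδ] at hlt
  linarith

set_option maxHeartbeats 1000000 in
/-- Non-degeneracy via the maximum principle: if `u₁` is continuous on a closed ball,
positive at the center, and `Δu₁ ≥ c₀ > 0` on `{u₁ > 0} ∩ B_r(x₁)`, then
`sup_{∂B_r(x₁)} u₁ ≥ (c₀/(2n)) r²`. -/
theorem stmt3 (n : ℕ) (x₁ : EuclideanSpace ℝ (Fin n)) (r c₀ : ℝ) (hr : 0 < r) (hc₀ : 0 < c₀)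
    (u₁ : EuclideanSpace ℝ (Fin n) → ℝ)
    (hcont : ContinuousOn u₁ (closedBall x₁ r))
    (hpos : 0 < u₁ x₁)
    (hlap : ∀ x ∈ {x | 0 < u₁ x} ∩ ball x₁ r, c₀ ≤ lapl n u₁ x) :
    c₀ / (2 * n) * r ^ 2 ≤ sSup (u₁ '' sphere x₁ r) := by
  rcases Nat.eq_zero_or_pos n with hn | hn
  · exfalso
    subst hn
    have := hlap x₁ ⟨hpos, mem_ball_self hr⟩
    simp only [lapl, Finset.univ_eq_empty, Finset.sum_empty] at this
    linarith
  · set S := sSup (u₁ '' sphere x₁ r) with hS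
    have hnpos : (0:ℝ) < (n:ℝ) := by exact_mod_cast hn
    have hbdd : BddAbove (u₁ '' sphere x₁ r) :=
      ((isCompact_sphere x₁ r).image_of_continuousOn
        (hcont.mono sphere_subset_closedBall)).bddAbove
    have main : ∀ α : ℝ, 0 < α → α < c₀ / (2 * n) → α * r ^ 2 ≤ S := by
      intro α hα hαβ
      have hvcont : ContinuousOn (fun x => u₁ x - α * ‖x - x₁‖ ^ 2) (closedBall x₁ r) := by
        apply hcont.sub
        apply Continuous.continuousOn
        fun_prop
      obtain ⟨z, hzmem, hmax⟩ := (isCompact_closedBall x₁ r).exists_isMaxOn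
        ⟨x₁, mem_closedBall_self hr.le⟩ hvcont
      have hvz : 0 < u₁ z - α * ‖z - x₁‖ ^ 2 := by
        have h1 : u₁ x₁ - α * ‖x₁ - x₁‖ ^ 2 ≤ u₁ z - α * ‖z - x₁‖ ^ 2 :=
          hmax (mem_closedBall_self hr.le)
        simp only [sub_self, norm_zero] at h1
        nlinarith
      have huz : 0 < u₁ z := by nlinarith [sq_nonneg ‖z - x₁‖]
      rcases eq_or_lt_of_le (mem_closedBall.mp hzmem) with hzs | hzb
      · -- the max is on the sphere
        have hzsph : z ∈ sphere x₁ r := hzs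
        have hle : u₁ z ≤ S := le_csSup hbdd ⟨z, hzsph, rfl⟩
        have hnz : ‖z - x₁‖ = r := by rw [← dist_eq_norm]; exact hzs
        rw [hnz] at hvz
        linarith
      · -- the max is interior: contradiction
        exfalso
        have hzball : z ∈ ball x₁ r := mem_ball.mpr hzb
        have hsum := hlap z ⟨huz, hzball⟩
        rw [lapl] at hsum
        obtain ⟨i, hi⟩ : ∃ i : Fin n, 2 * α <
            fderiv ℝ (fun x => fderiv ℝ u₁ x (EuclideanSpace.single i 1)) z
              (EuclideanSpace.single i 1) := by
          by_contra hcon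
          push_neg at hcon
          have hsle : (∑ i : Fin n,
              fderiv ℝ (fun x => fderiv ℝ u₁ x (EuclideanSpace.single i 1)) z
                (EuclideanSpace.single i 1)) ≤ ∑ _i : Fin n, 2 * α :=
            Finset.sum_le_sum (fun i _ => hcon i)
          rw [Finset.sum_const, Finset.card_univ, Fintype.card_fin, nsmul_eq_mul] at hsle
          have h2 : α * (2 * n) < c₀ := by
            rw [lt_div_iff₀ (by positivity)] at hαβ
            linarith
          have : (n:ℝ) * (2 * α) = α * (2 * n) := by ring
          linarith [hsum, hsle]
        set Ei : EuclideanSpace ℝ (Fin n) := EuclideanSpace.single i (1:ℝ) with hEidef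
        have hEi : ‖Ei‖ = 1 := by
          rw [hEidef, EuclideanSpace.norm_single]
          norm_num
        by_cases hd : DifferentiableAt ℝ u₁ z
        · -- differentiable case: first-order condition
          have hfun : (fun x : EuclideanSpace ℝ (Fin n) => ‖x - x₁‖ ^ 2) =
              fun x => (inner ℝ (x - x₁) (x - x₁) : ℝ) := by
            funext x; rw [real_inner_self_eq_norm_sq]
          have hsub : DifferentiableAt ℝ (fun x : EuclideanSpace ℝ (Fin n) => x - x₁) z :=
            differentiableAt_fun_id.sub_const _
          have hQd : DifferentiableAt ℝ (fun x : EuclideanSpace ℝ (Fin n) => ‖x - x₁‖ ^ 2) z := by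
            rw [hfun]; exact hsub.inner ℝ hsub
          have hloc : IsLocalMax (fun x => u₁ x - α * ‖x - x₁‖ ^ 2) z :=
            hmax.isLocalMax (Filter.mem_of_superset (isOpen_ball.mem_nhds hzball)
              ball_subset_closedBall)
          have hv0 : fderiv ℝ (fun x => u₁ x - α * ‖x - x₁‖ ^ 2) z = 0 :=
            hloc.fderiv_eq_zero
          have hsplit : fderiv ℝ (fun x => u₁ x - α * ‖x - x₁‖ ^ 2) z =
              fderiv ℝ u₁ z - fderiv ℝ (fun x => α * ‖x - x₁‖ ^ 2) z :=
            fderiv_sub hd (hQd.const_mul α)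
          have hQα : fderiv ℝ (fun x : EuclideanSpace ℝ (Fin n) => α * ‖x - x₁‖ ^ 2) z =
              α • fderiv ℝ (fun x : EuclideanSpace ℝ (Fin n) => ‖x - x₁‖ ^ 2) z :=
            fderiv_const_mul hQd α
          have hQval : fderiv ℝ (fun x : EuclideanSpace ℝ (Fin n) => ‖x - x₁‖ ^ 2) z Ei =
              2 * (inner ℝ (z - x₁) Ei : ℝ) := by
            rw [hfun, fderiv_inner_apply ℝ hsub hsub]
            have hid : fderiv ℝ (fun x : EuclideanSpace ℝ (Fin n) => x - x₁) z =
                ContinuousLinearMap.id ℝ _ := by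
              rw [fderiv_sub_const, fderiv_id']
            rw [hid]
            simp only [ContinuousLinearMap.id_apply]
            rw [real_inner_comm Ei (z - x₁)]
            ring
          have hkey : fderiv ℝ u₁ z Ei = 2 * α * (inner ℝ (z - x₁) Ei : ℝ) := by
            have := congrArg (fun (L : EuclideanSpace ℝ (Fin n) →L[ℝ] ℝ) => L Ei)
              (hv0 ▸ hsplit)
            simp only [ContinuousLinearMap.zero_apply, ContinuousLinearMap.sub_apply] at this
            rw [hQα] at this
            simp only [ContinuousLinearMap.smul_apply, smul_eq_mul] at this
            rw [hQval] at this
            linarith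
          exact core_lemma n x₁ z Ei α r u₁ hα hEi hzball hcont hmax (le_of_eq hkey.symm) hi
        · -- non-differentiable case: fderiv u₁ z = 0
          have h0 : fderiv ℝ u₁ z = 0 := fderiv_zero_of_not_differentiableAt hd
          rcases le_or_gt (inner ℝ (z - x₁) Ei : ℝ) 0 with hcle | hcgt
          · apply core_lemma n x₁ z Ei α r u₁ hα hEi hzball hcont hmax ?_ hi
            rw [h0]
            simp only [ContinuousLinearMap.zero_apply]
            nlinarith
          · apply core_lemma n x₁ z (-Ei) α r u₁ hα (by rw [norm_neg]; exact hEi)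
              hzball hcont hmax ?_ ?_
            · rw [h0]
              simp only [ContinuousLinearMap.zero_apply, inner_neg_right]
              nlinarith
            · have hfn : (fun x : EuclideanSpace ℝ (Fin n) => fderiv ℝ u₁ x (-Ei)) =
                  fun x => -(fderiv ℝ u₁ x Ei) := by
                funext x; exact (fderiv ℝ u₁ x).map_neg Ei
              rw [hfn, fderiv_fun_neg]
              simp only [ContinuousLinearMap.neg_apply, map_neg, neg_neg]
              exact hi
    -- conclude by taking α → c₀/(2n)
    have hβ : 0 < c₀ / (2 * n) := by positivity
    have hS0 : 0 < S :=
      lt_of_lt_of_le (by positivity)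
        (main (c₀ / (2 * n) / 2) (by positivity) (by linarith))
    by_contra hcon
    push_neg at hcon
    have hr2 : (0:ℝ) < r ^ 2 := by positivity
    set β := c₀ / (2 * n) with hβdef
    have hα1 : 0 < (S / r ^ 2 + β) / 2 := by positivity
    have hα2 : (S / r ^ 2 + β) / 2 < β := by
      have : S / r ^ 2 < β := by
        rw [div_lt_iff₀ hr2]
        linarith
      linarith
    have := main _ hα1 hα2
    have hexp : (S / r ^ 2 + β) / 2 * r ^ 2 = (S + β * r ^ 2) / 2 := by
      field_simp
    rw [hexp] at this
    linarith
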